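/- For all n ≥ 0, c_2c_3c_4·α^n + c_1c_3c_4·β^n + c_1c_2c_4·γ^n + c_1c_2c_3·δ^n = −(1/563)·V_n, where V_n is the Tetranacci-type sequence with V_0 = −5, V_1 = 2, V_2 = 13, V_3 = 32 and V_n = V_{n−1} + V_{n−2} + V_{n−3} + V_{n−4} for n ≥ 4. -/
import Mathlib

/-- A Tetranacci-type sequence. -/
def seqV : ℕ → ℤ
  | 0 => (-5)
  | 1 => 2
  | 2 => 13
  | 3 => 32
  | n + 4 => seqV (n + 3) + seqV (n + 2) + seqV (n + 1) + seqV n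

theorem tetra_c_triple_prod (α β γ δ : ℂ)
    (hα : α ^ 4 - α ^ 3 - α ^ 2 - α - 1 = 0) (hβ : β ^ 4 - β ^ 3 - β ^ 2 - β - 1 = 0)
    (hγ : γ ^ 4 - γ ^ 3 - γ ^ 2 - γ - 1 = 0) (hδ : δ ^ 4 - δ ^ 3 - δ ^ 2 - δ - 1 = 0)
    (hαβ : α ≠ β) (hαγ : α ≠ γ) (hαδ : α ≠ δ) (hβγ : β ≠ γ) (hβδ : β ≠ δ) (hγδ : γ ≠ δ)
    (c₁ c₂ c₃ c₄ : ℂ)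
    (hc₁ : c₁ = α ^ 2 / ((α - β) * (α - γ) * (α - δ)))
    (hc₂ : c₂ = β ^ 2 / ((β - α) * (β - γ) * (β - δ)))
    (hc₃ : c₃ = γ ^ 2 / ((γ - α) * (γ - β) * (γ - δ)))
    (hc₄ : c₄ = δ ^ 2 / ((δ - α) * (δ - β) * (δ - γ))) (n : ℕ) :
    c₂ * c₃ * c₄ * α ^ n + c₁ * c₃ * c₄ * β ^ n + c₁ * c₂ * c₄ * γ ^ n
      + c₁ * c₂ * c₃ * δ ^ n = -(1 / 563 : ℂ) * seqV n := by
  have hab : α - β ≠ 0 := sub_ne_zero.mpr hαβ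
  have hag : α - γ ≠ 0 := sub_ne_zero.mpr hαγ
  have had : α - δ ≠ 0 := sub_ne_zero.mpr hαδ
  have hbg : β - γ ≠ 0 := sub_ne_zero.mpr hβγ
  have hbd : β - δ ≠ 0 := sub_ne_zero.mpr hβδ
  have hgd : γ - δ ≠ 0 := sub_ne_zero.mpr hγδ
  have hba : β - α ≠ 0 := sub_ne_zero.mpr hαβ.symm
  have hga : γ - α ≠ 0 := sub_ne_zero.mpr hαγ.symm
  have hda : δ - α ≠ 0 := sub_ne_zero.mpr hαδ.symm
  have hgb : γ - β ≠ 0 := sub_ne_zero.mpr hβγ.symm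
  have hdb : δ - β ≠ 0 := sub_ne_zero.mpr hβδ.symm
  have hdg : δ - γ ≠ 0 := sub_ne_zero.mpr hγδ.symm
  have h2ab : α^3+α^2*β+α*β^2+β^3 - α^2 - α*β - β^2 - α - β - 1 = 0 := by
    apply mul_left_cancel₀ hab; linear_combination hα - hβ
  have h2ag : α^3+α^2*γ+α*γ^2+γ^3 - α^2 - α*γ - γ^2 - α - γ - 1 = 0 := by
    apply mul_left_cancel₀ hag; linear_combination hα - hγ
  have h2ad : α^3+α^2*δ+α*δ^2+δ^3 - α^2 - α*δ - δ^2 - α - δ - 1 = 0 := by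
    apply mul_left_cancel₀ had; linear_combination hα - hδ
  have h3abg : α^2+β^2+γ^2+α*β+α*γ+β*γ - α - β - γ - 1 = 0 := by
    apply mul_left_cancel₀ hbg; linear_combination h2ab - h2ag
  have h3abd : α^2+β^2+δ^2+α*β+α*δ+β*δ - α - β - δ - 1 = 0 := by
    apply mul_left_cancel₀ hbd; linear_combination h2ab - h2ad
  have E1 : α+β+γ+δ = 1 := by
    apply mul_left_cancel₀ hgd; linear_combination h3abg - h3abd
  have E2 : α*β+α*γ+α*δ+β*γ+β*δ+γ*δ = -1 := by
    linear_combination (α+β+γ)*E1 - h3abg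
  have Pα : α^4 - (α+β+γ+δ)*α^3 + (α*β+α*γ+α*δ+β*γ+β*δ+γ*δ)*α^2
      - (α*β*γ+α*β*δ+α*γ*δ+β*γ*δ)*α + α*β*γ*δ = 0 := by ring
  have Pβ : β^4 - (α+β+γ+δ)*β^3 + (α*β+α*γ+α*δ+β*γ+β*δ+γ*δ)*β^2
      - (α*β*γ+α*β*δ+α*γ*δ+β*γ*δ)*β + α*β*γ*δ = 0 := by ring
  have Qα : (1 - (α*β*γ+α*β*δ+α*γ*δ+β*γ*δ))*α + (α*β*γ*δ + 1) = 0 := by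
    linear_combination Pα - hα + α^3*E1 - α^2*E2
  have Qβ : (1 - (α*β*γ+α*β*δ+α*γ*δ+β*γ*δ))*β + (α*β*γ*δ + 1) = 0 := by
    linear_combination Pβ - hβ + β^3*E1 - β^2*E2
  have E3 : α*β*γ+α*β*δ+α*γ*δ+β*γ*δ = 1 := by
    apply mul_left_cancel₀ hab; linear_combination Qβ - Qα
  have E4 : α*β*γ*δ = -1 := by
    linear_combination Qα + α*E3
  have hΔ : ((α-β)*(α-γ)*(α-δ)*((β-γ)*(β-δ)*(γ-δ)))^2 = -563 := by
    linear_combination ((-27)*(α*β*γ*δ)^2 + (-192)*(α*β*γ+α*β*δ+α*γ*δ+β*γ*δ)*(α*β*γ*δ)^2 + (-6)*(α*β*γ+α*β*δ+α*γ*δ+β*γ*δ)^2*(α*β*γ*δ) + (-4)*(α*β*γ+α*β*δ+α*γ*δ+β*γ*δ)^3 + 144*(α*β+α*γ+α*δ+β*γ+β*δ+γ*δ)*(α*β*γ*δ)^2 + 18*(α*β+α*γ+α*δ+β*γ+β*δ+γ*δ)*(α*β*γ+α*β*δ+α*γ*δ+β*γ*δ)*(α*β*γ*δ) + 18*(α*β+α*γ+α*δ+β*γ+β*δ+γ*δ)*(α*β*γ+α*β*δ+α*γ*δ+β*γ*δ)^3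 + (-80)*(α*β+α*γ+α*δ+β*γ+β*δ+γ*δ)^2*(α*β*γ+α*β*δ+α*γ*δ+β*γ*δ)*(α*β*γ*δ) + (α*β+α*γ+α*δ+β*γ+β*δ+γ*δ)^2*(α*β*γ+α*β*δ+α*γ*δ+β*γ*δ)^2 + (-4)*(α*β+α*γ+α*δ+β*γ+β*δ+γ*δ)^3*(α*β*γ*δ) + (-27)*(α+β+γ+δ)*(α*β*γ*δ)^2 + (-6)*(α+β+γ+δ)*(α*β*γ+α*β*δ+α*γ*δ+β*γ*δ)^2*(α*β*γ*δ) + (-4)*(α+β+γ+δ)*(α*β*γ+α*β*δ+α*γ*δ+β*γ*δ)^3 + 144*(α+β+γ+δ)*(α*β+α*γ+α*δ+β*γ+β*δ+γ*δ)*(α*β*γ*δ)^2 + 18*(α+β+γ+δ)*(α*β+α*γ+α*δ+β*γ+β*δ+γ*δ)*(α*β*γ+α*β*δ+α*γ*δ+β*γ*δ)*(α*β*γ*δ) + (α+β+γ+δ)*(α*β+α*γ+α*δ+β*γ+β*δ+γ*δ)^2*(α*β*γ+α*β*δ+α*γ*δ+β*γ*δ)^2 + (-4)*(α+β+γ+δ)*(α*β+α*γ+α*δ+β*γ+β*δ+γ*δ)^3*(α*β*γ*δ)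 + (-27)*(α+β+γ+δ)^2*(α*β*γ*δ)^2 + (-4)*(α+β+γ+δ)^2*(α*β*γ+α*β*δ+α*γ*δ+β*γ*δ)^3 + 18*(α+β+γ+δ)^2*(α*β+α*γ+α*δ+β*γ+β*δ+γ*δ)*(α*β*γ+α*β*δ+α*γ*δ+β*γ*δ)*(α*β*γ*δ) + (-27)*(α+β+γ+δ)^3*(α*β*γ*δ)^2)*E1 + ((-20)*(α*β*γ*δ) + 272*(α*β*γ*δ)^2 + 98*(α*β*γ+α*β*δ+α*γ*δ+β*γ*δ)*(α*β*γ*δ) + (-5)*(α*β*γ+α*β*δ+α*γ*δ+β*γ*δ)^2 + 144*(α*β*γ+α*β*δ+α*γ*δ+β*γ*δ)^2*(α*β*γ*δ) + 18*(α*β*γ+α*β*δ+α*γ*δ+β*γ*δ)^3 + 20*(α*β+α*γ+α*δ+β*γ+β*δ+γ*δ)*(α*β*γ*δ) + (-128)*(α*β+α*γ+α*δ+β*γ+β*δ+γ*δ)*(α*β*γ*δ)^2 + (-80)*(α*β+α*γ+α*δ+β*γ+β*δ+γ*δ)*(α*β*γ+α*β*δ+α*γ*δ+β*γ*δ)*(α*β*γ*δ)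 + 5*(α*β+α*γ+α*δ+β*γ+β*δ+γ*δ)*(α*β*γ+α*β*δ+α*γ*δ+β*γ*δ)^2 + (-20)*(α*β+α*γ+α*δ+β*γ+β*δ+γ*δ)^2*(α*β*γ*δ) + (-4)*(α*β+α*γ+α*δ+β*γ+β*δ+γ*δ)^2*(α*β*γ+α*β*δ+α*γ*δ+β*γ*δ)^2 + 16*(α*β+α*γ+α*δ+β*γ+β*δ+γ*δ)^3*(α*β*γ*δ))*E2 + ((-44) + (-248)*(α*β*γ*δ) + (-192)*(α*β*γ*δ)^2 + (-44)*(α*β*γ+α*β*δ+α*γ*δ+β*γ*δ) + (-150)*(α*β*γ+α*β*δ+α*γ*δ+β*γ*δ)*(α*β*γ*δ) + (-49)*(α*β*γ+α*β*δ+α*γ*δ+β*γ*δ)^2 + (-27)*(α*β*γ+α*β*δ+α*γ*δ+β*γ*δ)^3)*E3 + (519 + (-747)*(α*β*γ*δ) + 256*(α*β*γ*δ)^2)*E4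
  have T1 : c₂*c₃*c₄ = -(1/563 : ℂ) * (β^2*γ^2*δ^2*((α-β)*(α-γ)*(α-δ))) := by
    rw [hc₂, hc₃, hc₄, div_mul_div_comm, div_mul_div_comm,
      div_eq_iff ((mul_ne_zero (mul_ne_zero (mul_ne_zero (mul_ne_zero hba hbg) hbd) (mul_ne_zero (mul_ne_zero hga hgb) hgd)) (mul_ne_zero (mul_ne_zero hda hdb) hdg)) : (β - α) * (β - γ) * (β - δ) * ((γ - α) * (γ - β) * (γ - δ))
        * ((δ - α) * (δ - β) * (δ - γ)) ≠ 0)]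
    linear_combination (β^2*γ^2*δ^2/563) * hΔ
  have T2 : c₁*c₃*c₄ = -(1/563 : ℂ) * (α^2*γ^2*δ^2*((β-α)*(β-γ)*(β-δ))) := by
    rw [hc₁, hc₃, hc₄, div_mul_div_comm, div_mul_div_comm,
      div_eq_iff ((mul_ne_zero (mul_ne_zero (mul_ne_zero (mul_ne_zero hab hag) had) (mul_ne_zero (mul_ne_zero hga hgb) hgd)) (mul_ne_zero (mul_ne_zero hda hdb) hdg)) : (α - β) * (α - γ) * (α - δ) * ((γ - α) * (γ - β) * (γ - δ))
        * ((δ - α) * (δ - β) * (δ - γ)) ≠ 0)]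
    linear_combination (α^2*γ^2*δ^2/563) * hΔ
  have T3 : c₁*c₂*c₄ = -(1/563 : ℂ) * (α^2*β^2*δ^2*((γ-α)*(γ-β)*(γ-δ))) := by
    rw [hc₁, hc₂, hc₄, div_mul_div_comm, div_mul_div_comm,
      div_eq_iff ((mul_ne_zero (mul_ne_zero (mul_ne_zero (mul_ne_zero hab hag) had) (mul_ne_zero (mul_ne_zero hba hbg) hbd)) (mul_ne_zero (mul_ne_zero hda hdb) hdg)) : (α - β) * (α - γ) * (α - δ) * ((β - α) * (β - γ) * (β - δ))
        * ((δ - α) * (δ - β) * (δ - γ)) ≠ 0)]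
    linear_combination (α^2*β^2*δ^2/563) * hΔ
  have T4 : c₁*c₂*c₃ = -(1/563 : ℂ) * (α^2*β^2*γ^2*((δ-α)*(δ-β)*(δ-γ))) := by
    rw [hc₁, hc₂, hc₃, div_mul_div_comm, div_mul_div_comm,
      div_eq_iff ((mul_ne_zero (mul_ne_zero (mul_ne_zero (mul_ne_zero hab hag) had) (mul_ne_zero (mul_ne_zero hba hbg) hbd)) (mul_ne_zero (mul_ne_zero hga hgb) hgd)) : (α - β) * (α - γ) * (α - δ) * ((β - α) * (β - γ) * (β - δ))
        * ((γ - α) * (γ - β) * (γ - δ)) ≠ 0)]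
    linear_combination (α^2*β^2*γ^2/563) * hΔ
  induction n using Nat.strong_induction_on with
  | _ n ih =>
    match n, ih with
    | 0, _ =>
      norm_num [seqV]
      linear_combination T1 + T2 + T3 + T4 + (-(1/563 : ℂ))*(((-8)*(α*β*γ*δ)^2)*E1 + (4*(α*β*γ+α*β*δ+α*γ*δ+β*γ*δ)*(α*β*γ*δ))*E2 + ((-1) + (-4)*(α*β*γ*δ) + (-1)*(α*β*γ+α*β*δ+α*γ*δ+β*γ*δ) + (-1)*(α*β*γ+α*β*δ+α*γ*δ+β*γ*δ)^2)*E3 + (4 + (-8)*(α*β*γ*δ))*E4)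
    | 1, _ =>
      norm_num [seqV]
      linear_combination α*T1 + β*T2 + γ*T3 + δ*T4 + (-(1/563 : ℂ))*(((α*β*γ*δ)^2 + (α+β+γ+δ)*(α*β*γ*δ)^2)*E1 + ((-1)*(α*β*γ*δ) + (-1)*(α*β*γ+α*β*δ+α*γ*δ+β*γ*δ)*(α*β*γ*δ))*E3 + ((-2) + (α*β*γ*δ))*E4)
    | 2, _ =>
      norm_num [seqV]
      linear_combination α^2*T1 + β^2*T2 + γ^2*T3 + δ^2*T4 + (-(1/563 : ℂ))*(((α*β*γ*δ)^2 + (-4)*(α*β+α*γ+α*δ+β*γ+β*δ+γ*δ)*(α*β*γ*δ)^2 + (α+β+γ+δ)*(α*β*γ*δ)^2 + (α+β+γ+δ)^2*(α*β*γ*δ)^2)*E1 + ((-4)*(α*β*γ*δ)^2)*E2 + (8*(α*β*γ*δ)^2)*E3 + ((-13) + 13*(α*β*γ*δ))*E4)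
    | 3, _ =>
      norm_num [seqV]
      linear_combination α^3*T1 + β^3*T2 + γ^3*T3 + δ^3*T4 + (-(1/563 : ℂ))*(((α*β*γ*δ)^2 + 6*(α*β*γ+α*β*δ+α*γ*δ+β*γ*δ)*(α*β*γ*δ)^2 + (-5)*(α*β+α*γ+α*δ+β*γ+β*δ+γ*δ)*(α*β*γ*δ)^2 + (α+β+γ+δ)*(α*β*γ*δ)^2 + (-5)*(α+β+γ+δ)*(α*β+α*γ+α*δ+β*γ+β*δ+γ*δ)*(α*β*γ*δ)^2 + (α+β+γ+δ)^2*(α*β*γ*δ)^2 + (α+β+γ+δ)^3*(α*β*γ*δ)^2)*E1 + ((-9)*(α*β*γ*δ)^2 + 4*(α*β+α*γ+α*δ+β*γ+β*δ+γ*δ)*(α*β*γ*δ)^2)*E2 + (6*(α*β*γ*δ)^2)*E3 + ((-32) + 32*(α*β*γ*δ) + (-16)*(α*β*γ*δ)^2)*E4)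
    | (m+4), ih =>
      have i0 := ih m (by omega)
      have i1 := ih (m+1) (by omega)
      have i2 := ih (m+2) (by omega)
      have i3 := ih (m+3) (by omega)
      have hV : seqV (m+4) = seqV (m+3) + seqV (m+2) + seqV (m+1) + seqV m := rfl
      rw [hV]
      push_cast
      linear_combination i0 + i1 + i2 + i3 + (c₂*c₃*c₄*α^m)*hα + (c₁*c₃*c₄*β^m)*hβ
        + (c₁*c₂*c₄*γ^m)*hγ + (c₁*c₂*c₃*δ^m)*hδ
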